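/- arXiv:1605.07047 — 2 statements merged into one kernel-verified Lean document; each statement's English description precedes it below -/
import Mathlib

section
/- Let ξ be the function from the previous context and define g : ℂ → ℂ by g(0) = 0 and g(w) = e² w e^{2πi ξ(|w|)} for w ≠ 0. Then g is a homeomorphism of ℂ with inverse g⁻¹(0) = 0 and g⁻¹(w) = e⁻² w e^{-2πi ξ(e⁻²|w|)} for w ≠ 0. -/
/-- The function ξ from the paper. -/
noncomputable def xi (r : ℝ) : ℝ :=
  if r ≤ 1 then 0
  else
    if Even ⌊Real.log r⌋ then
      (Real.log r - (⌊Real.log r⌋ : ℝ)) /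
        (2 : ℝ) ^ (⌊Real.logb 2 (((⌊Real.log r / 2⌋ + 1 : ℤ) : ℝ))⌋)
    else
      (1 - (Real.log r - (⌊Real.log r⌋ : ℝ))) /
        (2 : ℝ) ^ (⌊Real.logb 2 (((⌊Real.log r / 2⌋ + 1 : ℤ) : ℝ))⌋)

/-- g(w) = e² w e^{2πi ξ(|w|)} (note the formula gives g(0) = 0). -/
noncomputable def gMap (w : ℂ) : ℂ :=
  (Real.exp 2 : ℂ) * w * Complex.exp (2 * Real.pi * Complex.I * xi ‖w‖)

/-- The triangle-wave form of ξ as a function of t = log r. -/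
noncomputable def fAux (t : ℝ) : ℝ :=
  if t ≤ 0 then 0
  else (1 - |t - 2*(⌊t/2⌋:ℝ) - 1|) / (2 : ℝ) ^ (⌊Real.logb 2 (((⌊t / 2⌋ + 1 : ℤ) : ℝ))⌋)

lemma floor_half (t : ℝ) : ⌊t/2⌋ = ⌊t⌋ / 2 := by
  have h1 := Int.floor_le t; have h2 := Int.lt_floor_add_one t
  have e1 : (2:ℤ) * (⌊t⌋ / 2) ≤ ⌊t⌋ := by omega
  have e2 : ⌊t⌋ ≤ 2 * (⌊t⌋ / 2) + 1 := by omega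
  rw [Int.floor_eq_iff]
  constructor
  · have : ((2 * (⌊t⌋ / 2) : ℤ) : ℝ) ≤ ⌊t⌋ := by exact_mod_cast e1
    push_cast at this ⊢; linarith
  · have : ((⌊t⌋:ℤ):ℝ) ≤ ((2 * (⌊t⌋ / 2) + 1 : ℤ) : ℝ) := by exact_mod_cast e2
    push_cast at this ⊢; linarith

lemma xi_eq {r : ℝ} (hr : 0 ≤ r) : xi r = fAux (Real.log r) := by
  rcases le_or_gt r 1 with h | h
  · rw [xi, if_pos h, fAux, if_pos (Real.log_nonpos hr h)]
  · have ht : 0 < Real.log r := Real.log_pos h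
    rw [xi, if_neg (not_le.2 h), fAux, if_neg (not_le.2 ht)]
    set t := Real.log r
    have h1 := Int.floor_le t; have h2 := Int.lt_floor_add_one t
    have hm := floor_half t
    rcases Int.even_or_odd ⌊t⌋ with he | ho
    · rw [if_pos he]
      obtain ⟨k, hk⟩ := he
      have hmk : ⌊t/2⌋ = k := by omega
      have habs : |t - 2*(⌊t/2⌋:ℝ) - 1| = 1 - (t - ⌊t⌋) := by
        rw [abs_of_nonpos] <;>
        · rw [hmk]
          have : ((⌊t⌋:ℤ):ℝ) = 2*(k:ℝ) := by exact_mod_cast (by omega : ⌊t⌋ = 2*k)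
          push_cast at this ⊢ <;> linarith
      rw [habs]; ring_nf
    · rw [if_neg (Int.not_even_iff_odd.mpr ho)]
      obtain ⟨k, hk⟩ := ho
      have hmk : ⌊t/2⌋ = k := by omega
      have habs : |t - 2*(⌊t/2⌋:ℝ) - 1| = t - ⌊t⌋ := by
        rw [abs_of_nonneg] <;>
        · rw [hmk]
          have : ((⌊t⌋:ℤ):ℝ) = 2*(k:ℝ)+1 := by exact_mod_cast (by omega : ⌊t⌋ = 2*k+1)
          push_cast at this ⊢ <;> linarith
      rw [habs]

lemma num_nonneg (t : ℝ) : 0 ≤ 1 - |t - 2*(⌊t/2⌋:ℝ) - 1| := by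
  have h1 := Int.floor_le (t/2); have h2 := Int.lt_floor_add_one (t/2)
  rw [sub_nonneg, abs_le]; constructor <;> linarith

lemma fAux_nonneg (t : ℝ) : 0 ≤ fAux t := by
  rw [fAux]; split
  · exact le_refl _
  · exact div_nonneg (num_nonneg t) (zpow_pos two_pos _).le

lemma cont_fAux : Continuous fAux := by
  rw [continuous_iff_continuousAt]; intro t
  rcases lt_or_ge t 2 with ht | ht
  · -- near points below 2, fAux is the tent max 0 (min s (2 - s))
    have hcont : ContinuousAt (fun s : ℝ => max 0 (min s (2 - s))) t :=
      (continuous_const.max (continuous_id.min (continuous_const.sub continuous_id))).continuousAt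
    apply hcont.congr
    filter_upwards [Iio_mem_nhds ht] with s hs
    simp only [Set.mem_Iio] at hs
    rcases le_or_gt s 0 with h0 | h0
    · rw [fAux, if_pos h0, eq_comm, max_eq_left (le_trans (min_le_left _ _) h0)]
    · rw [fAux, if_neg (not_le.2 h0)]
      have hf : ⌊s/2⌋ = 0 := by
        rw [Int.floor_eq_zero_iff]; constructor
        · positivity
        · linarith
      rw [hf]
      have hnum : (1 - |s - 2*((0:ℤ):ℝ) - 1|) = min s (2 - s) := by
        rcases le_total s 1 with h | h
        · rw [abs_of_nonpos (by push_cast; linarith), min_eq_left (by linarith)]; push_cast; ring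
        · rw [abs_of_nonneg (by push_cast; linarith), min_eq_right (by linarith)]; push_cast; ring
      rw [hnum, show (((0:ℤ) + 1 : ℤ) : ℝ) = 1 by norm_num, Real.logb_one, Int.floor_zero,
        zpow_zero, div_one, max_eq_right (le_min h0.le (by linarith))]
  · have hm1 : 1 ≤ ⌊t/2⌋ := Int.le_floor.mpr (by push_cast; linarith)
    set m := ⌊t/2⌋ with hmdef
    rcases eq_or_ne (Int.fract (t/2)) 0 with hfr | hfr
    · -- t = 2m, even integer point, value 0, squeeze
      have ht2 : t = 2*(m:ℝ) := by
        have := Int.fract_add_floor (t/2)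
        rw [hfr] at this; rw [← hmdef] at this; linarith
      have hval : fAux t = 0 := by
        have hm1' : (1:ℝ) ≤ (m:ℝ) := by exact_mod_cast hm1
        rw [fAux, if_neg (not_le.2 (by linarith : (0:ℝ) < t))]
        rw [← hmdef]
        have : t - 2*(m:ℝ) - 1 = -1 := by linarith
        rw [this]; norm_num
      have hB : ∀ᶠ s in nhds t, fAux s ≤ |s - t| := by
        filter_upwards [Ioo_mem_nhds (by linarith : t - 1 < t) (by linarith : t < t + 1)] with s hs
        obtain ⟨hs1, hs2⟩ := hs
        have hm1' : (1:ℝ) ≤ (m:ℝ) := by exact_mod_cast hm1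
        have hs0 : 0 < s := by linarith
        rw [fAux, if_neg (not_le.2 hs0)]
        have hden : (1:ℝ) ≤ (2 : ℝ) ^ (⌊Real.logb 2 (((⌊s / 2⌋ + 1 : ℤ) : ℝ))⌋) := by
          apply one_le_zpow₀ one_le_two
          apply Int.floor_nonneg.mpr
          apply Real.logb_nonneg one_lt_two
          have : (0:ℤ) ≤ ⌊s/2⌋ := Int.floor_nonneg.mpr (by positivity)
          push_cast; exact_mod_cast by omega
        refine le_trans (div_le_self (num_nonneg s) hden) ?_
        rcases lt_or_ge s t with hlt | hle
        · have hfs : ⌊s/2⌋ = m - 1 := by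
            rw [Int.floor_eq_iff]
            constructor <;> push_cast <;> linarith
          rw [hfs]
          rw [abs_of_nonneg (by push_cast; linarith), abs_of_nonpos (by linarith)]
          push_cast; linarith
        · have hfs : ⌊s/2⌋ = m := by
            rw [Int.floor_eq_iff]
            constructor <;> push_cast <;> linarith
          rw [hfs]
          rw [abs_of_nonpos (by push_cast; linarith), abs_of_nonneg (by linarith)]
          push_cast; linarith
      have hT : Filter.Tendsto (fun s : ℝ => |s - t|) (nhds t) (nhds 0) := by
        have h : Continuous (fun s : ℝ => |s - t|) := by fun_prop
        have h2 := h.tendsto t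
        simpa using h2
      unfold ContinuousAt
      rw [hval]
      exact squeeze_zero' (.of_forall fAux_nonneg) hB hT
    · -- ⌊·/2⌋ locally constant
      have hfr' : (m:ℝ) < t/2 :=
        lt_of_le_of_ne (Int.floor_le _) (fun h => hfr (by rw [Int.fract, ← hmdef, ← h]; ring))
      have hub : t/2 < (m:ℝ)+1 := Int.lt_floor_add_one _
      set c := ⌊Real.logb 2 (((m + 1 : ℤ) : ℝ))⌋ with hcdef
      have hcont : ContinuousAt (fun s : ℝ => (1 - |s - 2*(m:ℝ) - 1|) / (2:ℝ) ^ c) t := by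
        fun_prop
      apply hcont.congr
      have hopen : Set.Ioo (2*(m:ℝ)) (2*(m:ℝ)+2) ∈ nhds t :=
        Ioo_mem_nhds (by linarith) (by linarith)
      filter_upwards [hopen] with s hs
      obtain ⟨hs1, hs2⟩ := hs
      have hm1' : (1:ℝ) ≤ (m:ℝ) := by exact_mod_cast hm1
      have hs0 : 0 < s := by linarith
      have hfs : ⌊s/2⌋ = m := by
        rw [Int.floor_eq_iff]
        constructor <;> push_cast <;> linarith
      rw [fAux, if_neg (not_le.2 hs0), hfs, ← hcdef]

/-- The inverse map. -/
noncomputable def hMap (w : ℂ) : ℂ :=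
  (Real.exp (-2) : ℂ) * w *
    Complex.exp (-(2 * Real.pi * Complex.I) * xi (Real.exp (-2) * ‖w‖))

lemma abs_helper (w : ℂ) (x c : ℝ) :
    ‖(Real.exp c : ℂ) * w * Complex.exp (2 * Real.pi * Complex.I * x)‖ =
      Real.exp c * ‖w‖ := by
  rw [norm_mul, norm_mul, Complex.norm_exp, Complex.norm_real, Real.norm_eq_abs, abs_of_pos (Real.exp_pos c)]
  norm_num [Complex.mul_re]

lemma abs_helper' (w : ℂ) (x c : ℝ) :
    ‖(Real.exp c : ℂ) * w * Complex.exp (-(2 * Real.pi * Complex.I) * x)‖ =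
      Real.exp c * ‖w‖ := by
  rw [norm_mul, norm_mul, Complex.norm_exp, Complex.norm_real, Real.norm_eq_abs, abs_of_pos (Real.exp_pos c)]
  norm_num [Complex.mul_re]

lemma abs_gMap (w : ℂ) : ‖gMap w‖ = Real.exp 2 * ‖w‖ :=
  abs_helper w _ 2

lemma abs_hMap (w : ℂ) : ‖hMap w‖ = Real.exp (-2) * ‖w‖ :=
  abs_helper' w _ (-2)

lemma exp_cancel (x : ℝ) :
    Complex.exp (2 * Real.pi * Complex.I * x) *
      Complex.exp (-(2 * Real.pi * Complex.I) * x) = 1 := by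
  rw [← Complex.exp_add, show (2 * (Real.pi:ℂ) * Complex.I * x) +
    (-(2 * Real.pi * Complex.I) * x) = 0 by ring, Complex.exp_zero]

lemma exp_cancel' : ((Real.exp (-2) : ℝ) : ℂ) * ((Real.exp 2 : ℝ) : ℂ) = 1 := by
  rw [← Complex.ofReal_mul, ← Real.exp_add]
  norm_num

lemma hMap_gMap (w : ℂ) : hMap (gMap w) = w := by
  rw [hMap, abs_gMap, show Real.exp (-2) * (Real.exp 2 * ‖w‖) = ‖w‖ by
    rw [← mul_assoc, ← Real.exp_add]; norm_num]
  rw [gMap]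
  calc ((Real.exp (-2) : ℝ) : ℂ) *
        ((Real.exp 2 : ℂ) * w * Complex.exp (2 * Real.pi * Complex.I * xi (‖w‖))) *
        Complex.exp (-(2 * Real.pi * Complex.I) * xi (‖w‖))
      = (((Real.exp (-2) : ℝ) : ℂ) * ((Real.exp 2 : ℝ) : ℂ)) * w *
        (Complex.exp (2 * Real.pi * Complex.I * xi (‖w‖)) *
          Complex.exp (-(2 * Real.pi * Complex.I) * xi (‖w‖))) := by ring
    _ = w := by rw [exp_cancel, exp_cancel']; ring

lemma gMap_hMap (w : ℂ) : gMap (hMap w) = w := by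
  rw [gMap, abs_hMap]
  rw [hMap]
  calc ((Real.exp 2 : ℝ) : ℂ) *
        ((Real.exp (-2) : ℂ) * w *
          Complex.exp (-(2 * Real.pi * Complex.I) * xi (Real.exp (-2) * ‖w‖))) *
        Complex.exp (2 * Real.pi * Complex.I * xi (Real.exp (-2) * ‖w‖))
      = (((Real.exp (-2) : ℝ) : ℂ) * ((Real.exp 2 : ℝ) : ℂ)) * w *
        (Complex.exp (2 * Real.pi * Complex.I * xi (Real.exp (-2) * ‖w‖)) *
          Complex.exp (-(2 * Real.pi * Complex.I) * xi (Real.exp (-2) * ‖w‖))) := by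
        ring
    _ = w := by rw [exp_cancel, exp_cancel']; ring

lemma cont_xi_comp {u : ℂ → ℝ} (hu : Continuous u) (hu0 : ∀ w, 0 ≤ u w)
    (hne : ∀ w ∈ ({z : ℂ | z ≠ 0} : Set ℂ), u w ≠ 0) :
    ∀ w : ℂ, w ≠ 0 → ContinuousAt (fun z => xi (u z)) w := by
  intro w hw
  have heq : (fun z : ℂ => xi (u z)) = fun z => fAux (Real.log (u z)) :=
    funext fun z => xi_eq (hu0 z)
  rw [heq]
  exact cont_fAux.continuousAt.comp
    ((Real.continuousAt_log (hne w hw)).comp hu.continuousAt)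

lemma cont_gMap : Continuous gMap := by
  rw [continuous_iff_continuousAt]; intro w
  rcases eq_or_ne w 0 with rfl | hw
  · have h0 : gMap 0 = 0 := by rw [gMap]; ring
    unfold ContinuousAt
    rw [h0, tendsto_zero_iff_norm_tendsto_zero]
    have hn : (fun z : ℂ => ‖gMap z‖) = fun z => Real.exp 2 * ‖z‖ :=
      funext fun z => abs_gMap z
    rw [hn]
    have hc : Continuous (fun z : ℂ => Real.exp 2 * ‖z‖) :=
      continuous_const.mul continuous_norm
    have := hc.tendsto 0
    simpa using this
  · apply ContinuousAt.mul
    · exact (continuousAt_const.mul continuousAt_id)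
    · apply Complex.continuous_exp.continuousAt.comp
      apply ContinuousAt.mul continuousAt_const
      exact Complex.continuous_ofReal.continuousAt.comp
        (cont_xi_comp continuous_norm (fun z => (norm_nonneg z))
          (fun z hz => by simpa using hz) w hw)

lemma cont_hMap : Continuous hMap := by
  rw [continuous_iff_continuousAt]; intro w
  rcases eq_or_ne w 0 with rfl | hw
  · have h0 : hMap 0 = 0 := by rw [hMap]; ring
    unfold ContinuousAt
    rw [h0, tendsto_zero_iff_norm_tendsto_zero]
    have hn : (fun z : ℂ => ‖hMap z‖) = fun z => Real.exp (-2) * ‖z‖ :=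
      funext fun z => abs_hMap z
    rw [hn]
    have hc : Continuous (fun z : ℂ => Real.exp (-2) * ‖z‖) :=
      continuous_const.mul continuous_norm
    have := hc.tendsto 0
    simpa using this
  · apply ContinuousAt.mul
    · exact (continuousAt_const.mul continuousAt_id)
    · apply Complex.continuous_exp.continuousAt.comp
      apply ContinuousAt.mul continuousAt_const
      refine Complex.continuous_ofReal.continuousAt.comp
        (cont_xi_comp (continuous_const.mul continuous_norm)
          (fun z => mul_nonneg (Real.exp_pos _).le (norm_nonneg z)) (fun z hz => ?_) w hw)
      simp only [Set.mem_setOf_eq] at hz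
      have : ‖z‖ ≠ 0 := by simpa using hz
      exact mul_ne_zero (Real.exp_pos _).ne' this

/-- The homeomorphism. -/
noncomputable def gHomeo : Homeomorph ℂ ℂ where
  toFun := gMap
  invFun := hMap
  left_inv := hMap_gMap
  right_inv := gMap_hMap
  continuous_toFun := cont_gMap
  continuous_invFun := cont_hMap

theorem gMap_homeomorph :
    ∃ G : Homeomorph ℂ ℂ, (∀ w, G w = gMap w) ∧ G.symm 0 = 0 ∧
      ∀ w : ℂ, w ≠ 0 → G.symm w =
        (Real.exp (-2) : ℂ) * w *
          Complex.exp (-(2 * Real.pi * Complex.I) * xi (Real.exp (-2) * ‖w‖)) := by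
  refine ⟨gHomeo, fun w => rfl, ?_, fun w _ => rfl⟩
  show hMap 0 = 0
  rw [hMap]; ring
end

section
/- For f as defined on the closed unit disk and any real z ∈ (1/2, e/(1+e)), for every natural number n, f^{2ⁿ-1}(z) = (e^{2(2ⁿ-1)} z)/(e^{2(2ⁿ-1)} z - z + 1) · e^{2πi n ln(z/(1-z))}. -/
/-- The map f from the paper, as a map of ℂ (it preserves the closed unit disk). -/
noncomputable def fMap (z : ℂ) : ℂ :=
  if ‖z‖ = 0 ∨ ‖z‖ = 1 then z
  else (Real.exp 2 : ℂ) * z / ((Real.exp 2 * ‖z‖ - ‖z‖ + 1 : ℝ) : ℂ) *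
    Complex.exp (2 * Real.pi * Complex.I * xi (‖z‖ / (1 - ‖z‖)))

lemma xi_pow (s : ℝ) (hs1 : 1 < s) (hsL : Real.log s < 1) (m : ℕ) :
    xi (Real.exp (2 * m) * s) = Real.log s / 2 ^ (Nat.log 2 (m + 1)) := by
  have hL0 : 0 < Real.log s := Real.log_pos hs1
  have hs0 : 0 < s := lt_trans one_pos hs1
  have he1 : 1 ≤ Real.exp (2 * m) := Real.one_le_exp (by positivity)
  have hgt : 1 < Real.exp (2 * m) * s := by nlinarith
  have hlog : Real.log (Real.exp (2 * m) * s) = 2 * m + Real.log s := by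
    rw [Real.log_mul (Real.exp_ne_zero _) (ne_of_gt hs0), Real.log_exp]
  have hfloor : ⌊Real.log (Real.exp (2 * m) * s)⌋ = 2 * m := by
    rw [hlog, show ((2 * m : ℝ)) = ((2 * (m : ℤ) : ℤ) : ℝ) by push_cast; ring,
      Int.floor_intCast_add]
    have h0 : ⌊Real.log s⌋ = 0 := Int.floor_eq_zero_iff.mpr ⟨hL0.le, hsL⟩
    rw [h0]; ring
  have hfloor2 : ⌊Real.log (Real.exp (2 * m) * s) / 2⌋ = m := by
    rw [hlog, show (2 * (m : ℝ) + Real.log s) / 2 = ((m : ℤ) : ℝ) + Real.log s / 2 by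
      push_cast; ring, Int.floor_intCast_add]
    have h0 : ⌊Real.log s / 2⌋ = 0 :=
      Int.floor_eq_zero_iff.mpr ⟨by positivity, by linarith⟩
    rw [h0]; ring
  unfold xi
  rw [if_neg (not_le.mpr hgt), hfloor,
    if_pos ⟨(m : ℤ), by ring⟩, hfloor2, hlog]
  have hcast : (((m : ℤ) + 1 : ℤ) : ℝ) = ((m + 1 : ℕ) : ℝ) := by push_cast; ring
  rw [hcast]
  have hfl : ⌊Real.logb 2 ((m + 1 : ℕ) : ℝ)⌋ = (Nat.log 2 (m + 1) : ℤ) := by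
    rw [show (2 : ℝ) = ((2 : ℕ) : ℝ) by norm_num,
      Real.floor_logb_natCast (Nat.cast_nonneg _), Int.log_natCast]
  rw [hfl, zpow_natCast]
  push_cast
  ring

lemma abs_exp_two_pi_I (a b : ℝ) :
    ‖Complex.exp (2 * Real.pi * Complex.I * ((a : ℂ) * (b : ℂ)))‖ = 1 := by
  rw [Complex.norm_exp, show (2 * (Real.pi : ℂ) * Complex.I * ((a : ℂ) * (b : ℂ))) =
    ((2 * Real.pi * (a * b) : ℝ) : ℂ) * Complex.I by push_cast; ring]
  simp

lemma iter_formula (z : ℝ)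
    (hz : z ∈ Set.Ioo (1 / 2 : ℝ) (Real.exp 1 / (1 + Real.exp 1))) (m : ℕ) :
    fMap^[m] (z : ℂ) =
      ((Real.exp (2 * m) * z / (Real.exp (2 * m) * z - z + 1) : ℝ) : ℂ) *
        Complex.exp (2 * Real.pi * Complex.I *
          ((∑ k ∈ Finset.range m, ((2 : ℝ) ^ (Nat.log 2 (k + 1)))⁻¹) *
            Real.log (z / (1 - z)))) := by
  obtain ⟨hz1, hz2⟩ := hz
  have hepos : (0 : ℝ) < Real.exp 1 := Real.exp_pos 1
  have hz0 : 0 < z := lt_trans (by norm_num) hz1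
  have hzlt1 : z < 1 := by
    have : Real.exp 1 / (1 + Real.exp 1) < 1 := by
      rw [div_lt_one (by linarith)]; linarith
    linarith
  have h1z : 0 < 1 - z := by linarith
  set s : ℝ := z / (1 - z) with hs_def
  have hs1 : 1 < s := by rw [hs_def, lt_div_iff₀ h1z]; linarith
  have hslt : s < Real.exp 1 := by
    have h := (lt_div_iff₀ (by linarith : (0:ℝ) < 1 + Real.exp 1)).mp hz2
    rw [hs_def, div_lt_iff₀ h1z]
    nlinarith
  have hL1 : Real.log s < 1 := by
    have := Real.log_lt_log (lt_trans one_pos hs1) hslt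
    rwa [Real.log_exp] at this
  have hL0 : 0 < Real.log s := Real.log_pos hs1
  induction m with
  | zero =>
    simp
  | succ m ih =>
    have heM : (1 : ℝ) ≤ Real.exp (2 * m) := Real.one_le_exp (by positivity)
    have he2 : (1 : ℝ) ≤ Real.exp 2 := Real.one_le_exp (by norm_num)
    set D : ℝ := Real.exp (2 * m) * z - z + 1 with hD_def
    have hD : 0 < D := by nlinarith
    set r : ℝ := Real.exp (2 * m) * z / D with hr_def
    have hr0 : 0 < r := by positivity
    have hr1 : r < 1 := by
      rw [hr_def, div_lt_one hD]; rw [hD_def]; linarith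
    have habs : ‖fMap^[m] (z : ℂ)‖ = r := by
      rw [ih, norm_mul, Complex.norm_real, Real.norm_eq_abs, abs_of_pos hr0, abs_exp_two_pi_I, mul_one]
    rw [Function.iterate_succ_apply', fMap,
      if_neg (by rw [habs]; push_neg; exact ⟨ne_of_gt hr0, ne_of_lt hr1⟩), habs, ih]
    have hrs : r / (1 - r) = Real.exp (2 * m) * s := by
      rw [hr_def, hs_def]
      have h1r : 1 - Real.exp (2 * m) * z / D = (1 - z) / D := by
        field_simp
        rw [hD_def]; ring
      rw [h1r]
      field_simp
    rw [hrs, xi_pow s hs1 hL1 m]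
    have hC : 0 < Real.exp 2 * r - r + 1 := by nlinarith
    have hE : Real.exp (2 * ((m : ℕ) + 1 : ℕ)) = Real.exp (2 * m) * Real.exp 2 := by
      rw [← Real.exp_add]; congr 1; push_cast; ring
    have h12 : (1 : ℝ) ≤ Real.exp (2 * m) * Real.exp 2 := by nlinarith
    have hD2 : 0 < Real.exp (2 * m) * Real.exp 2 * z - z + 1 := by nlinarith
    have hC2 : Real.exp 2 * r - r + 1 =
        (Real.exp (2 * m) * Real.exp 2 * z - z + 1) / D := by
      rw [hr_def]
      field_simp
      rw [hD_def]; ring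
    have hrad : Real.exp 2 * r / (Real.exp 2 * r - r + 1) =
        Real.exp (2 * m) * Real.exp 2 * z /
          (Real.exp (2 * m) * Real.exp 2 * z - z + 1) := by
      rw [hC2, hr_def]
      field_simp
    have hsum : (∑ k ∈ Finset.range (m + 1), ((2:ℝ) ^ Nat.log 2 (k + 1))⁻¹) =
        (∑ k ∈ Finset.range m, ((2:ℝ) ^ Nat.log 2 (k + 1))⁻¹) +
          ((2:ℝ) ^ Nat.log 2 (m + 1))⁻¹ := Finset.sum_range_succ _ _
    have hexp : Complex.exp (2 * (Real.pi : ℂ) * Complex.I *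
          ((((∑ k ∈ Finset.range m, ((2:ℝ) ^ Nat.log 2 (k + 1))⁻¹) +
            ((2:ℝ) ^ Nat.log 2 (m + 1))⁻¹ : ℝ) : ℂ) * ((Real.log s : ℝ) : ℂ))) =
        Complex.exp (2 * (Real.pi : ℂ) * Complex.I *
            (((∑ k ∈ Finset.range m, ((2:ℝ) ^ Nat.log 2 (k + 1))⁻¹ : ℝ) : ℂ) *
              ((Real.log s : ℝ) : ℂ))) *
          Complex.exp (2 * (Real.pi : ℂ) * Complex.I *
            ((Real.log s / 2 ^ Nat.log 2 (m + 1) : ℝ) : ℂ)) := by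
      rw [← Complex.exp_add]
      congr 1
      push_cast
      ring
    rw [hE, ← hrad, hsum, hexp]
    push_cast
    ring

lemma sum_inv_pow_log (n : ℕ) :
    (∑ k ∈ Finset.range (2 ^ n - 1), ((2 : ℝ) ^ (Nat.log 2 (k + 1)))⁻¹) = n := by
  induction n with
  | zero => simp
  | succ n ih =>
    have h2n : 1 ≤ 2 ^ n := Nat.one_le_two_pow
    have hps : (2 : ℕ) ^ (n + 1) = 2 ^ n * 2 := pow_succ 2 n
    have h1 : 2 ^ n - 1 ≤ 2 ^ (n + 1) - 1 := by omega
    rw [← Finset.sum_range_add_sum_Ico _ h1, ih]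
    have hval : ∀ k ∈ Finset.Ico (2 ^ n - 1) (2 ^ (n + 1) - 1),
        ((2 : ℝ) ^ (Nat.log 2 (k + 1)))⁻¹ = ((2 : ℝ) ^ n)⁻¹ := by
      intro k hk
      simp only [Finset.mem_Ico] at hk
      have hlog : Nat.log 2 (k + 1) = n :=
        Nat.log_eq_of_pow_le_of_lt_pow (by omega) (by omega)
      rw [hlog]
    rw [Finset.sum_congr rfl hval, Finset.sum_const, Nat.card_Ico,
      show 2 ^ (n + 1) - 1 - (2 ^ n - 1) = 2 ^ n by omega]
    have hne : ((2 : ℝ) ^ n) ≠ 0 := by positivity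
    push_cast
    field_simp
    rw [nsmul_eq_mul]
    push_cast
    field_simp

theorem fMap_iterate_formula (z : ℝ)
    (hz : z ∈ Set.Ioo (1 / 2 : ℝ) (Real.exp 1 / (1 + Real.exp 1))) (n : ℕ) :
    fMap^[2 ^ n - 1] (z : ℂ) =
      ((Real.exp (2 * (2 ^ n - 1 : ℕ)) * z / (Real.exp (2 * (2 ^ n - 1 : ℕ)) * z - z + 1) : ℝ) : ℂ) *
        Complex.exp (2 * Real.pi * Complex.I * ((n : ℝ) * Real.log (z / (1 - z)))) := by
  have h := iter_formula z hz (2 ^ n - 1)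
  rwa [sum_inv_pow_log] at h
end
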